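/- Explicit solution of the fluid-limit system (paper eqs. (3.29)–(3.31)): let k ≥ 1, let μ_1,…,μ_k > 0, let ϱ_j ∈ (0,1) for j = 1,…,k−1 and ϱ_k > 1. Define q(t) = (1 − 1/ϱ_k)(1 − e^{−ϱ_k μ_k t}), set x̃_k(t) = q(t), and for j = 1,…,k−1 set x̃_j(t) = (ϱ_j μ_j − μ_j) t − ϱ_j μ_j ∫_0^t q(s) ds. Then for every j = 1,…,k and every t ≥ 0, x̃_j(t) = ϱ_j μ_j ∫_0^t [ 1 − Σ_{l=1}^k Φ_s(x̃_l) ] ds − μ_j t. (In eq. (3.29) of the paper the last term is printed as +μ_j t; consistency with eqs. (3.14), (3.42) and (3.63) shows the intended sign is −μ_j t.) -/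

import Mathlib

open Set MeasureTheory intervalIntegral Finset

/-- The regulator `Ψ_t(X) = −inf_{s∈[0,t]} X(s)` (paper eq. (2.9)). -/
noncomputable def Psi (X : ℝ → ℝ) (t : ℝ) : ℝ := -sInf (X '' Set.Icc 0 t)

/-- The Skorokhod reflection `Φ_t(X) = X(t) + Ψ_t(X)` (paper eq. (2.11)). -/
noncomputable def Phi (X : ℝ → ℝ) (t : ℝ) : ℝ := X t + Psi X t

lemma Phi_of_isLeast {X : ℝ → ℝ} {t m : ℝ} (h : IsLeast (X '' Set.Icc 0 t) m) :
    Phi X t = X t - m := by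
  rw [Phi, Psi, h.csInf_eq]; ring

set_option maxHeartbeats 1000000 in
/-- Explicit solution of the fluid-limit system (paper eqs. (3.29)–(3.31)).
The `k ≥ 1` stations are indexed by `Fin (n+1)`; the bottleneck is `Fin.last n`. -/
theorem explicit_solution_of_fluid_limit_system
    (n : ℕ) (μ ϱ : Fin (n+1) → ℝ)
    (hμ : ∀ j, 0 < μ j)
    (hϱ : ∀ j, j ≠ Fin.last n → 0 < ϱ j ∧ ϱ j < 1)
    (hϱk : 1 < ϱ (Fin.last n))
    (q : ℝ → ℝ)
    (hq : ∀ t, q t = (1 - 1 / ϱ (Fin.last n)) *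
      (1 - Real.exp (-(ϱ (Fin.last n) * μ (Fin.last n) * t))))
    (x : Fin (n+1) → ℝ → ℝ)
    (hxk : ∀ t, x (Fin.last n) t = q t)
    (hxj : ∀ j, j ≠ Fin.last n → ∀ t,
      x j t = (ϱ j * μ j - μ j) * t - ϱ j * μ j * ∫ s in (0:ℝ)..t, q s) :
    ∀ j, ∀ t ≥ (0:ℝ),
      x j t = ϱ j * μ j * (∫ s in (0:ℝ)..t, (1 - ∑ l, Phi (x l) s)) - μ j * t := by
  set k := Fin.last n with hk
  set c := ϱ k * μ k with hc
  set A := 1 - 1 / ϱ k with hA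
  clear_value c A
  have hϱk0 : (0:ℝ) < ϱ k := lt_trans one_pos hϱk
  have hcpos : 0 < c := by rw [hc]; exact mul_pos hϱk0 (hμ k)
  have hA0 : 0 < A := by
    rw [hA, sub_pos, div_lt_one hϱk0]; exact hϱk
  have hA1 : A < 1 := by
    rw [hA]; have : 0 < 1 / ϱ k := by positivity
    linarith
  -- q monotone on ℝ and q 0 = 0
  have hq0 : q 0 = 0 := by simp [hq 0]
  have hqmono : Monotone q := by
    intro a b hab
    rw [hq a, hq b]
    have : Real.exp (-(c * b)) ≤ Real.exp (-(c * a)) := by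
      apply Real.exp_le_exp.2; nlinarith
    nlinarith
  have hqnonneg : ∀ s, 0 ≤ s → 0 ≤ q s := fun s hs => hq0 ▸ hqmono hs
  have hqle : ∀ s, q s ≤ A := by
    intro s
    rw [hq s]
    have h1 : 0 < Real.exp (-(c * s)) := Real.exp_pos _
    nlinarith
  have hqcont : Continuous q := by
    have : q = fun t => A * (1 - Real.exp (-(c * t))) := funext hq
    rw [this]; continuity
  have hqint : ∀ a b : ℝ, IntervalIntegrable q volume a b :=
    fun a b => (hqcont.intervalIntegrable a b)
  -- Phi of the bottleneck
  have hxlast : x k = q := funext hxk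
  have hPhik : ∀ s, 0 ≤ s → Phi (x k) s = q s := by
    intro s hs
    rw [hxlast]
    have hle : IsLeast (q '' Set.Icc 0 s) 0 := by
      constructor
      · exact ⟨0, ⟨le_refl 0, hs⟩, hq0⟩
      · rintro y ⟨u, hu, rfl⟩; exact hqnonneg u hu.1
    rw [Phi_of_isLeast hle, sub_zero]
  -- Phi of the other stations
  have hPhij : ∀ j, j ≠ k → ∀ s, 0 ≤ s → Phi (x j) s = 0 := by
    intro j hj s hs
    obtain ⟨hj0, hj1⟩ := hϱ j hj
    have hanti : ∀ a b, 0 ≤ a → a ≤ b → x j b ≤ x j a := by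
      intro a b ha hab
      rw [hxj j hj a, hxj j hj b]
      have hint : (∫ u in a..b, q u) = (∫ u in (0:ℝ)..b, q u) - ∫ u in (0:ℝ)..a, q u := by
        rw [intervalIntegral.integral_interval_sub_left (hqint 0 b) (hqint 0 a)]
      have hnn : 0 ≤ ∫ u in a..b, q u := by
        apply intervalIntegral.integral_nonneg hab
        intro u hu; exact hqnonneg u (le_trans ha hu.1)
      have hμj := hμ j
      have e2 : 0 ≤ ϱ j * μ j * ((∫ u in (0:ℝ)..b, q u) - ∫ u in (0:ℝ)..a, q u) := by
        rw [← hint]; exact mul_nonneg (mul_pos hj0 hμj).le hnn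
      have e1 : (ϱ j * μ j - μ j) * b ≤ (ϱ j * μ j - μ j) * a :=
        mul_le_mul_of_nonpos_left hab (by nlinarith)
      have e2' : ϱ j * μ j * (∫ u in (0:ℝ)..a, q u) ≤ ϱ j * μ j * ∫ u in (0:ℝ)..b, q u := by
        nlinarith [e2]
      linarith
    have hle : IsLeast (x j '' Set.Icc 0 s) (x j s) := by
      constructor
      · exact ⟨s, ⟨hs, le_refl s⟩, rfl⟩
      · rintro y ⟨u, hu, rfl⟩; exact hanti u s hu.1 hu.2
    rw [Phi_of_isLeast hle, sub_self]
  -- the sum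
  have hsum : ∀ s, 0 ≤ s → (∑ l, Phi (x l) s) = q s := by
    intro s hs
    rw [Finset.sum_eq_single_of_mem k (Finset.mem_univ k)]
    · exact hPhik s hs
    · intro b _ hb; exact hPhij b hb s hs
  intro j t ht
  -- rewrite the integral
  have hcongr : (∫ s in (0:ℝ)..t, (1 - ∑ l, Phi (x l) s)) = ∫ s in (0:ℝ)..t, (1 - q s) := by
    apply intervalIntegral.integral_congr
    intro s hs
    rw [Set.uIcc_of_le ht] at hs
    simp only [hsum s hs.1]
  have hsplit : (∫ s in (0:ℝ)..t, (1 - q s)) = t - ∫ s in (0:ℝ)..t, q s := by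
    rw [intervalIntegral.integral_sub intervalIntegrable_const (hqint 0 t)]
    simp
  rw [hcongr, hsplit]
  by_cases hj : j = k
  · subst hj
    rw [hxk t, hq t]
    -- compute the integral of q
    have hIq : (∫ s in (0:ℝ)..t, q s) = A * (t - (1 - Real.exp (-(c * t))) / c) := by
      have : (∫ s in (0:ℝ)..t, q s) =
          ∫ s in (0:ℝ)..t, (A * (1 - Real.exp (-(c * s)))) := by
        apply intervalIntegral.integral_congr; intro s _; rw [hq s]
      rw [this]
      rw [intervalIntegral.integral_const_mul]
      have hI1 : (∫ s in (0:ℝ)..t, (1 - Real.exp (-(c * s)))) =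
          t - ∫ s in (0:ℝ)..t, Real.exp (-(c * s)) := by
        rw [intervalIntegral.integral_sub intervalIntegrable_const]
        · simp
        · have : Continuous fun s : ℝ => Real.exp (-(c * s)) := by continuity
          exact this.intervalIntegrable 0 t
      have hI2 : (∫ s in (0:ℝ)..t, Real.exp (-(c * s))) =
          (1 - Real.exp (-(c * t))) / c := by
        have : (∫ s in (0:ℝ)..t, Real.exp (-(c * s))) =
            ∫ s in (0:ℝ)..t, Real.exp ((-c) * s) := by
          congr 1; funext s; ring_nf
        rw [this, intervalIntegral.integral_comp_mul_left _ (neg_ne_zero.2 hcpos.ne'),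
          integral_exp]
        simp only [smul_eq_mul, mul_zero, Real.exp_zero]
        field_simp [hcpos.ne']
        ring
      rw [hI1, hI2]
    rw [hIq]
    have hcne : c ≠ 0 := hcpos.ne'
    have hAc : ϱ k * μ k = c := hc.symm
    have hμk : μ k = c * (1 - A) := by
      rw [hA, hc]; field_simp; ring
    rw [hAc, hμk]
    field_simp [hcpos.ne']
    ring
  · rw [hxj j hj t]
    ring
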